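/- Let λ be a probability vector in ℝ^d with all entries strictly positive, and let Ω_k(λ)_{ij} = k λ_i δ_{ij} − √(λ_i λ_j) for a positive integer k < d. Then Ω_k(λ) has exactly one negative eigenvalue. -/

import Mathlib

open Matrix

/-- The matrix `Ω_k(λ)` with entries `k λ_i δ_{ij} − √(λ_i λ_j)`. -/
noncomputable def OmegaMat (d k : ℕ) (lam : Fin d → ℝ) : Matrix (Fin d) (Fin d) ℝ :=
  fun i j => (if i = j then (k : ℝ) * lam i else 0) - Real.sqrt (lam i * lam j)

lemma quadform (d k : ℕ) (lam : Fin d → ℝ) (hpos : ∀ i, 0 ≤ lam i) (x : Fin d → ℝ) :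
    x ⬝ᵥ (OmegaMat d k lam) *ᵥ x
      = (k : ℝ) * (∑ i, lam i * x i ^ 2) - (∑ i, Real.sqrt (lam i) * x i) ^ 2 := by
  have h1 : ∀ i j, Real.sqrt (lam i * lam j) = Real.sqrt (lam i) * Real.sqrt (lam j) :=
    fun i j => Real.sqrt_mul (hpos i) _
  simp only [OmegaMat, dotProduct, mulVec, dotProduct, sub_mul, mul_sub,
    Finset.sum_sub_distrib, Finset.mul_sum, h1, mul_ite, ite_mul, mul_zero, zero_mul,
    Finset.sum_ite_eq, Finset.mem_univ, if_true]
  rw [sq (∑ i, Real.sqrt (lam i) * x i), Finset.sum_mul_sum]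
  congr 1
  · exact Finset.sum_congr rfl fun i _ => by ring
  · exact Finset.sum_congr rfl fun i _ =>
      Finset.sum_congr rfl fun j _ => by ring

theorem stmt2 (d k : ℕ) (hk : 0 < k) (hkd : k < d) (lam : Fin d → ℝ)
    (hpos : ∀ i, 0 < lam i) (hsum : ∑ i, lam i = 1)
    (hH : (OmegaMat d k lam).IsHermitian) :
    (Finset.univ.filter fun i => hH.eigenvalues i < 0).card = 1 := by
  have hpos' : ∀ i, 0 ≤ lam i := fun i => (hpos i).le
  -- at least one negative eigenvalue
  have hne : (Finset.univ.filter fun i => hH.eigenvalues i < 0).Nonempty := by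
    by_contra hcon
    rw [Finset.not_nonempty_iff_eq_empty, Finset.filter_eq_empty_iff] at hcon
    have hps : (OmegaMat d k lam).PosSemidef :=
      hH.posSemidef_iff_eigenvalues_nonneg.mpr fun i => not_lt.mp (hcon (Finset.mem_univ i))
    set x0 : Fin d → ℝ := fun i => (Real.sqrt (lam i))⁻¹ with hx0
    have hQ : x0 ⬝ᵥ (OmegaMat d k lam) *ᵥ x0 = (d : ℝ) * ((k : ℝ) - d) := by
      rw [quadform d k lam hpos' x0]
      have e1 : ∀ i, lam i * x0 i ^ 2 = 1 := by
        intro i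
        have h2 : ((Real.sqrt (lam i))⁻¹) ^ 2 = (lam i)⁻¹ := by
          rw [inv_pow, Real.sq_sqrt (hpos' i)]
        show lam i * ((Real.sqrt (lam i))⁻¹) ^ 2 = 1
        rw [h2]
        exact mul_inv_cancel₀ (hpos i).ne'
      have e2 : ∀ i, Real.sqrt (lam i) * x0 i = 1 := fun i =>
        mul_inv_cancel₀ (Real.sqrt_ne_zero'.mpr (hpos i))
      simp only [e1, e2, Finset.sum_const, Finset.card_univ, Fintype.card_fin, nsmul_eq_mul,
        mul_one]
      ring
    have h0 : (0:ℝ) ≤ x0 ⬝ᵥ (OmegaMat d k lam) *ᵥ x0 := by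
      simpa using hps.dotProduct_mulVec_nonneg x0
    rw [hQ] at h0
    have : (d : ℝ) * ((k : ℝ) - d) < 0 := by
      have hd0 : (0:ℝ) < d := by exact_mod_cast hk.trans hkd
      have hkdr : (k : ℝ) < d := by exact_mod_cast hkd
      exact mul_neg_of_pos_of_neg hd0 (by linarith)
    linarith
  -- at most one negative eigenvalue
  have hle : (Finset.univ.filter fun i => hH.eigenvalues i < 0).card ≤ 1 := by
    rw [Finset.card_le_one]
    intro i hi j hj
    by_contra hne'
    rw [Finset.mem_filter] at hi hj
    have hμi : hH.eigenvalues i < 0 := hi.2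
    have hμj : hH.eigenvalues j < 0 := hj.2
    set u : Fin d → ℝ := ⇑(hH.eigenvectorBasis i) with hu
    set w : Fin d → ℝ := ⇑(hH.eigenvectorBasis j) with hw
    have hAu : (OmegaMat d k lam) *ᵥ u = hH.eigenvalues i • u := hH.mulVec_eigenvectorBasis i
    have hAw : (OmegaMat d k lam) *ᵥ w = hH.eigenvalues j • w := hH.mulVec_eigenvectorBasis j
    have horth := orthonormal_iff_ite.mp hH.eigenvectorBasis.orthonormal
    have huu : u ⬝ᵥ u = 1 := by
      have := horth i i
      rw [if_pos rfl, EuclideanSpace.inner_eq_star_dotProduct, star_trivial] at this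
      exact this
    have hww : w ⬝ᵥ w = 1 := by
      have := horth j j
      rw [if_pos rfl, EuclideanSpace.inner_eq_star_dotProduct, star_trivial] at this
      exact this
    have huw : u ⬝ᵥ w = 0 := by
      have := horth i j
      rw [if_neg hne', EuclideanSpace.inner_eq_star_dotProduct, star_trivial] at this
      rw [dotProduct_comm]
      exact this
    have hwu : w ⬝ᵥ u = 0 := by rw [dotProduct_comm]; exact huw
    set v : Fin d → ℝ := fun i => Real.sqrt (lam i) with hv
    -- common step: from a vector x with v ⬝ᵥ x = 0 and x ⬝ᵥ A x < 0, contradiction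
    have key : ∀ x : Fin d → ℝ, v ⬝ᵥ x = 0 → ¬ (x ⬝ᵥ (OmegaMat d k lam) *ᵥ x < 0) := by
      intro x hvx
      rw [quadform d k lam hpos' x]
      have : (∑ i, Real.sqrt (lam i) * x i) = v ⬝ᵥ x := rfl
      rw [this, hvx]
      have hs0 : (0:ℝ) ≤ ∑ i, lam i * x i ^ 2 :=
        Finset.sum_nonneg fun i _ => mul_nonneg (hpos' i) (sq_nonneg _)
      have : (0:ℝ) ≤ (k : ℝ) * (∑ i, lam i * x i ^ 2) :=
        mul_nonneg (Nat.cast_nonneg k) hs0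
      push_neg
      linarith
    by_cases hb : v ⬝ᵥ u = 0
    · refine key u hb ?_
      rw [hAu, dotProduct_smul, huu]
      simpa using hμi
    · set a : ℝ := v ⬝ᵥ w with ha
      set b : ℝ := v ⬝ᵥ u with hbdef
      set x : Fin d → ℝ := a • u - b • w with hx
      have hvx : v ⬝ᵥ x = 0 := by
        rw [hx, dotProduct_sub, dotProduct_smul, dotProduct_smul]
        simp only [smul_eq_mul, ← ha, ← hbdef]
        ring
      refine key x hvx ?_
      have hAx : (OmegaMat d k lam) *ᵥ x
          = a • (hH.eigenvalues i • u) - b • (hH.eigenvalues j • w) := by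
        rw [hx, mulVec_sub, mulVec_smul, mulVec_smul, hAu, hAw]
      rw [hAx, hx]
      have expand : (a • u - b • w) ⬝ᵥ (a • (hH.eigenvalues i • u) - b • (hH.eigenvalues j • w))
          = a ^ 2 * hH.eigenvalues i * (u ⬝ᵥ u) - a * b * hH.eigenvalues j * (u ⬝ᵥ w)
            - a * b * hH.eigenvalues i * (w ⬝ᵥ u) + b ^ 2 * hH.eigenvalues j * (w ⬝ᵥ w) := by
        simp only [sub_dotProduct, dotProduct_sub, smul_dotProduct, dotProduct_smul,
          smul_eq_mul]
        ring
      rw [expand, huu, hww, huw, hwu]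
      have h1 : a ^ 2 * hH.eigenvalues i ≤ 0 :=
        mul_nonpos_of_nonneg_of_nonpos (sq_nonneg a) hμi.le
      have h2 : b ^ 2 * hH.eigenvalues j < 0 :=
        mul_neg_of_pos_of_neg (by positivity) hμj
      nlinarith
  exact le_antisymm hle (Finset.card_pos.mpr hne)
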